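/- Let E ⊆ V×V, W ⊆ V, P = Δ_{Wᶜ}E, B = E P*, B⁻ = Bᵀ, K = (Pᵀ)⁺P⁺, C = (Δ_W K Δ_W)⁺ ∪ Δ_W, W* = E* W, and C* = (Δ_{W*} K Δ_{W*})⁺ ∪ Δ_{W*}. Then the conditional active relation A = Δ ∪ B ∪ B⁻ ∪ K ∪ (B ∪ K) C (B⁻ ∪ K) equals the star conditional active relation A* = Δ ∪ B ∪ B⁻ ∪ K ∪ (B ∪ K) C* (B⁻ ∪ K). -/

import Mathlib

open Relation Set

local infixr:80 " ∘r " => Relation.Comp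

variable {V : Type*}

/-- Subdiagonal relation on a subset `X` of `V`. -/
def dia (X : Set V) : V → V → Prop := fun a b => a = b ∧ a ∈ X

/-- Foreset of a subset `C` under a relation `R`. -/
def foreset (R : V → V → Prop) (C : Set V) : Set V := {a | ∃ c ∈ C, R a c}

private lemma flip_transGen {P : V → V → Prop} {a b : V} (h : TransGen P a b) :
    TransGen (flip P) b a := by
  induction h with
  | single h => exact TransGen.single h
  | tail _ h ih => exact TransGen.head h ih

/-- Every element of `W* = E* W` is in `W` or reaches `W` by `P⁺`. -/
private lemma repr_lemma {E : V → V → Prop} {W : Set V} {P : V → V → Prop}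
    (hP : P = dia Wᶜ ∘r E) {x : V} (hx : x ∈ foreset (ReflTransGen E) W) :
    ∃ w ∈ W, x = w ∨ TransGen P x w := by
  obtain ⟨w, hw, hxw⟩ := hx
  induction hxw using ReflTransGen.head_induction_on with
  | refl => exact ⟨w, hw, Or.inl rfl⟩
  | @head c c' h hcw ih =>
    by_cases hc : c ∈ W
    · exact ⟨c, hc, Or.inl rfl⟩
    · obtain ⟨w2, hw2, h'⟩ := ih
      have hp : P c c' := by subst hP; exact ⟨c, ⟨rfl, hc⟩, h⟩
      rcases h' with rfl | ht
      · exact ⟨c', hw2, Or.inr (TransGen.single hp)⟩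
      · exact ⟨w2, hw2, Or.inr (TransGen.head hp ht)⟩

private lemma Ktrans_left {P K : V → V → Prop}
    (hK : K = TransGen (flip P) ∘r TransGen P)
    {x w b : V} (hR : x = w ∨ TransGen P x w) (h : K x b) : K w b := by
  subst hK
  obtain ⟨m, hxm, hmb⟩ := h
  rcases hR with rfl | ht
  · exact ⟨m, hxm, hmb⟩
  · exact ⟨m, (flip_transGen ht).trans hxm, hmb⟩

private lemma Ktrans_right {P K : V → V → Prop}
    (hK : K = TransGen (flip P) ∘r TransGen P)
    {a y w : V} (hR : y = w ∨ TransGen P y w) (h : K a y) : K a w := by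
  subst hK
  obtain ⟨m, ham, hmy⟩ := h
  rcases hR with rfl | ht
  · exact ⟨m, ham, hmy⟩
  · exact ⟨m, ham, hmy.trans ht⟩

private lemma Btrans {E P B : V → V → Prop}
    (hB : B = E ∘r ReflTransGen P)
    {a x w : V} (hR : x = w ∨ TransGen P x w) (h : B a x) : B a w := by
  subst hB
  obtain ⟨m, ham, hmx⟩ := h
  rcases hR with rfl | ht
  · exact ⟨m, ham, hmx⟩
  · exact ⟨m, ham, hmx.trans ht.to_reflTransGen⟩

theorem stmt12 (E : V → V → Prop) (W : Set V)
    (P B K C Cs : V → V → Prop) (Ws : Set V)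
    (hP : P = dia Wᶜ ∘r E)
    (hB : B = E ∘r ReflTransGen P)
    (hK : K = TransGen (flip P) ∘r TransGen P)
    (hC : C = TransGen (dia W ∘r (K ∘r dia W)) ⊔ dia W)
    (hWs : Ws = foreset (ReflTransGen E) W)
    (hCs : Cs = TransGen (dia Ws ∘r (K ∘r dia Ws)) ⊔ dia Ws) :
    dia (univ : Set V) ⊔ B ⊔ flip B ⊔ K ⊔ ((B ⊔ K) ∘r (C ∘r (flip B ⊔ K)))
      = dia (univ : Set V) ⊔ B ⊔ flip B ⊔ K ⊔ ((B ⊔ K) ∘r (Cs ∘r (flip B ⊔ K))) := by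
  have hWWs : W ⊆ Ws := by
    intro w hw; rw [hWs]; exact ⟨w, hw, ReflTransGen.refl⟩
  -- representatives
  have hrep : ∀ x ∈ Ws, ∃ w ∈ W, x = w ∨ TransGen P x w := by
    intro x hx; exact repr_lemma hP (hWs ▸ hx)
  -- transfer of left endpoint
  have hleft : ∀ {a x w : V}, (x = w ∨ TransGen P x w) → (B ⊔ K) a x → (B ⊔ K) a w := by
    intro a x w hR h
    rcases h with h | h
    · exact Or.inl (Btrans hB hR h)
    · exact Or.inr (Ktrans_right hK hR h)
  have hright : ∀ {y w b : V}, (y = w ∨ TransGen P y w) → (flip B ⊔ K) y b →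
      (flip B ⊔ K) w b := by
    intro y w b hR h
    rcases h with h | h
    · exact Or.inl (Btrans hB hR h)
    · exact Or.inr (Ktrans_left hK hR h)
  -- transfer of chains
  have hchain : ∀ {x y : V}, TransGen (dia Ws ∘r (K ∘r dia Ws)) x y →
      ∃ w w', w ∈ W ∧ w' ∈ W ∧ (x = w ∨ TransGen P x w) ∧ (y = w' ∨ TransGen P y w') ∧
        TransGen (dia W ∘r (K ∘r dia W)) w w' := by
    intro x y h
    induction h with
    | single h =>
      obtain ⟨x', ⟨rfl, hxWs⟩, y', hK', rfl, hyWs⟩ := h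
      obtain ⟨w, hw, hRx⟩ := hrep _ hxWs
      obtain ⟨w', hw', hRy⟩ := hrep _ hyWs
      refine ⟨w, w', hw, hw', hRx, hRy, TransGen.single ?_⟩
      exact ⟨w, ⟨rfl, hw⟩, w', Ktrans_left hK hRx (Ktrans_right hK hRy hK'), rfl, hw'⟩
    | tail _ h ih =>
      obtain ⟨w, w', hw, hw', hRx, hRy, hch⟩ := ih
      obtain ⟨y', ⟨rfl, hyWs⟩, z', hK', rfl, hzWs⟩ := h
      obtain ⟨w'', hw'', hRz⟩ := hrep _ hzWs
      refine ⟨w, w'', hw, hw'', hRx, hRz, hch.tail ?_⟩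
      exact ⟨w', ⟨rfl, hw'⟩, w'', Ktrans_left hK hRy (Ktrans_right hK hRz hK'), rfl, hw''⟩
  funext a b
  simp only [Pi.sup_apply, sup_Prop_eq, eq_iff_iff]
  constructor
  · -- C ⊆ Cs by monotonicity
    rintro (h | ⟨x, hax, y, hxy, hyb⟩)
    · exact Or.inl h
    refine Or.inr ⟨x, hax, y, ?_, hyb⟩
    rw [hCs]; rw [hC] at hxy
    rcases hxy with h | ⟨rfl, hx⟩
    · refine Or.inl (TransGen.mono ?_ _ _ h)
      rintro u v ⟨u', ⟨rfl, hu⟩, v', hK', rfl, hv⟩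
      exact ⟨u, ⟨rfl, hWWs hu⟩, v', hK', rfl, hWWs hv⟩
    · exact Or.inr ⟨rfl, hWWs hx⟩
  · rintro (h | ⟨x, hax, y, hxy, hyb⟩)
    · exact Or.inl h
    rw [hCs] at hxy
    rcases hxy with h | ⟨rfl, hxWs⟩
    · obtain ⟨w, w', hw, hw', hRx, hRy, hch⟩ := hchain h
      exact Or.inr ⟨w, hleft hRx hax, w', by rw [hC]; exact Or.inl hch, hright hRy hyb⟩
    · obtain ⟨w, hw, hR⟩ := hrep _ hxWs
      exact Or.inr ⟨w, hleft hR hax, w, by rw [hC]; exact Or.inr ⟨rfl, hw⟩,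
        hright hR hyb⟩
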